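/- arXiv:1603.01296 — 2 statements merged into one kernel-verified Lean document; each statement's English description precedes it below -/
import Mathlib

section
/- With H₂ = 1 + 4·M₂(ℤ₂) and H₃ = 1 + 8·M₂(ℤ₂) inside GL₂(ℤ₂), the set of squares of elements of H₂ equals H₃, i.e., H₂² = H₃. -/
open Matrix

/-- The principal congruence subgroup `1 + 2ᵏ·M₂(ℤ₂)` of `GL₂(ℤ₂)`, i.e. the kernel of
reduction modulo `2ᵏ`. -/
noncomputable def congSubgroup (k : ℕ) : Subgroup (GL (Fin 2) ℤ_[2]) :=
  MonoidHom.ker (Matrix.GeneralLinearGroup.map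
    (Ideal.Quotient.mk (Ideal.span {(2 : ℤ_[2]) ^ k})))

private abbrev M2 := Matrix (Fin 2) (Fin 2) ℤ_[2]

private lemma dvd_mul_apply' {a b : ℤ_[2]} {M N : M2} (hM : ∀ i j, a ∣ M i j)
    (hN : ∀ i j, b ∣ N i j) (i j : Fin 2) : a * b ∣ (M * N) i j := by
  rw [Matrix.mul_apply]
  exact Finset.dvd_sum fun k _ => mul_dvd_mul (hM i k) (hN k j)

private lemma two_mul_apply' (M : M2) (i j : Fin 2) : ((2 : M2) * M) i j = 2 * M i j := by
  rw [two_mul, Matrix.add_apply, two_mul]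

private lemma natCast_mul_apply' (k : ℕ) (M : M2) (i j : Fin 2) :
    ((k : M2) * M) i j = (k : ℤ_[2]) * M i j := by
  rw [← nsmul_eq_mul, Matrix.smul_apply, nsmul_eq_mul]

private lemma smod_iff' (m : ℕ) (x y : ℤ_[2]) :
    (x ≡ y [SMOD ((Ideal.span {(2:ℤ_[2])}) ^ m • ⊤ : Submodule ℤ_[2] ℤ_[2])]) ↔
      (2:ℤ_[2])^m ∣ x - y := by
  rw [SModEq.sub_mem]
  simp [← Ideal.one_eq_top, smul_eq_mul, mul_one, Ideal.span_singleton_pow,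
    Ideal.mem_span_singleton]

set_option synthInstance.maxHeartbeats 1000000 in
private lemma mem_congSubgroup_iff' (k : ℕ) (g : GL (Fin 2) ℤ_[2]) :
    g ∈ congSubgroup k ↔ ∀ i j, (2:ℤ_[2])^k ∣ ((g : Matrix (Fin 2) (Fin 2) ℤ_[2]) - 1) i j := by
  rw [congSubgroup, MonoidHom.mem_ker, Matrix.GeneralLinearGroup.map, Units.ext_iff]
  rw [Units.coe_map]
  have h1 : ((1 : GL (Fin 2) (ℤ_[2] ⧸ Ideal.span {(2:ℤ_[2])^k})) : Matrix (Fin 2) (Fin 2) _)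
      = (RingHom.mapMatrix (Ideal.Quotient.mk (Ideal.span {(2:ℤ_[2])^k}))) 1 := by
    simp
  rw [h1, ← Matrix.ext_iff]
  have key : ∀ i j : Fin 2,
      ((RingHom.mapMatrix (Ideal.Quotient.mk (Ideal.span {(2:ℤ_[2])^k})))
          (g : Matrix (Fin 2) (Fin 2) ℤ_[2]) i j
        = (RingHom.mapMatrix (Ideal.Quotient.mk (Ideal.span {(2:ℤ_[2])^k}))) 1 i j)
        ↔ (2:ℤ_[2])^k ∣ ((g : Matrix (Fin 2) (Fin 2) ℤ_[2]) - 1) i j := by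
    intro i j
    rw [RingHom.mapMatrix_apply, RingHom.mapMatrix_apply, Matrix.map_apply, Matrix.map_apply,
      Ideal.Quotient.eq, Ideal.mem_span_singleton, Matrix.sub_apply]
  exact ⟨fun h i j => (key i j).1 (h i j), fun h i j => (key i j).2 (h i j)⟩

private lemma exists_sqrt_aux' (B : M2) : ∃ A : M2, A + 2 * A ^ 2 = B := by
  classical
  let f : ℕ → M2 := fun n => Nat.rec 0 (fun _ An => B - 2 * An ^ 2) n
  have hfs : ∀ n, f (n + 1) = B - 2 * (f n) ^ 2 := fun n => rfl
  have step : ∀ n, ∀ i j, (2:ℤ_[2])^n ∣ (f (n+1) - f n) i j := by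
    intro n
    induction n with
    | zero => intro i j; simp
    | succ n ih =>
      intro i j
      have hid : f (n+2) - f (n+1)
          = -((2 : M2) * (f (n+1) * (f (n+1) - f n) + (f (n+1) - f n) * f n)) := by
        rw [hfs (n+1), hfs n]; noncomm_ring
      rw [hid, Matrix.neg_apply, dvd_neg, two_mul_apply', pow_succ, mul_comm ((2:ℤ_[2])^n) 2]
      refine mul_dvd_mul_left 2 ?_
      rw [Matrix.add_apply]
      refine dvd_add ?_ ?_
      · simpa using dvd_mul_apply' (fun i j => one_dvd _) ih i j
      · simpa using dvd_mul_apply' ih (fun i j => one_dvd _) i j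
  have cauchy : ∀ m n, m ≤ n → ∀ i j, (2:ℤ_[2])^m ∣ (f n - f m) i j := by
    intro m n hmn
    induction n, hmn using Nat.le_induction with
    | base => intro i j; simp
    | succ n hmn ih =>
      intro i j
      have : (f (n+1) - f m) i j = (f (n+1) - f n) i j + (f n - f m) i j := by
        simp [Matrix.sub_apply]
      rw [this]
      exact dvd_add (dvd_trans (pow_dvd_pow 2 hmn) (step n i j)) (ih i j)
  have prec : IsPrecomplete (Ideal.span {(2:ℤ_[2])}) ℤ_[2] :=
    (PadicInt.maximalIdeal_eq_span_p (p := 2)) ▸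
      (inferInstance : IsPrecomplete (IsLocalRing.maximalIdeal ℤ_[2]) ℤ_[2])
  have haus : IsHausdorff (Ideal.span {(2:ℤ_[2])}) ℤ_[2] :=
    (PadicInt.maximalIdeal_eq_span_p (p := 2)) ▸
      (inferInstance : IsHausdorff (IsLocalRing.maximalIdeal ℤ_[2]) ℤ_[2])
  have H : ∀ i j : Fin 2, ∃ L : ℤ_[2], ∀ n, (2:ℤ_[2])^n ∣ f n i j - L := by
    intro i j
    obtain ⟨L, hL⟩ := prec.prec (f := fun n => f n i j) (by
      intro m n hmn
      rw [smod_iff']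
      have := cauchy m n hmn i j
      rw [Matrix.sub_apply] at this
      exact (dvd_sub_comm).1 this)
    exact ⟨L, fun n => by have := hL n; rw [smod_iff'] at this; exact this⟩
  choose L hL using H
  refine ⟨Matrix.of L, ?_⟩
  set A : M2 := Matrix.of L with hA
  have final : ∀ i j, ((A + 2 * A ^ 2 - B : M2)) i j = 0 := by
    intro i j
    have alln : ∀ n : ℕ, (2:ℤ_[2])^n ∣ ((A + 2 * A ^ 2 - B : M2)) i j := by
      intro n
      have hdecomp : A + 2 * A ^ 2 - B
          = (A - f n) + (2 : M2) * (A * (A - f n) + (A - f n) * f n)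
            + (f n - f (n+1)) := by
        rw [hfs n]; noncomm_ring
      have h2 : ∀ i j, (2:ℤ_[2])^n ∣ (A - f n) i j := by
        intro i j; rw [Matrix.sub_apply]
        have := hL i j n; rw [← dvd_neg] at this; simpa [hA] using this
      rw [hdecomp, Matrix.add_apply, Matrix.add_apply]
      refine dvd_add (dvd_add (h2 i j) ?_) ?_
      · rw [two_mul_apply', Matrix.add_apply]
        refine Dvd.dvd.mul_left (dvd_add ?_ ?_) 2
        · simpa using dvd_mul_apply' (fun i j => one_dvd _) h2 i j
        · simpa using dvd_mul_apply' h2 (fun i j => one_dvd _) i j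
      · have := step n i j
        rw [Matrix.sub_apply] at this ⊢
        exact dvd_sub_comm.1 this
    exact haus.haus (((A + 2 * A ^ 2 - B : M2)) i j) (by
      intro n
      rw [smod_iff', sub_zero]
      exact alln n)
  ext i j
  have := final i j
  rw [Matrix.sub_apply, sub_eq_zero] at this
  simpa [Matrix.add_apply] using this


/-- With `H₂ = 1 + 4·M₂(ℤ₂)` and `H₃ = 1 + 8·M₂(ℤ₂)` inside `GL₂(ℤ₂)`, the set of squares of
elements of `H₂` equals `H₃`, i.e. `H₂² = H₃`. -/
theorem squares_of_H2_eq_H3 :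
    {g : GL (Fin 2) ℤ_[2] | ∃ h ∈ congSubgroup 2, g = h ^ 2} =
      (congSubgroup 3 : Set (GL (Fin 2) ℤ_[2])) := by
  ext g
  simp only [Set.mem_setOf_eq, SetLike.mem_coe]
  constructor
  · rintro ⟨h, hm, rfl⟩
    rw [mem_congSubgroup_iff'] at hm ⊢
    intro i j
    have hval : ((h ^ 2 : GL (Fin 2) ℤ_[2]) : M2) = (h : M2) * (h : M2) := by
      rw [Units.val_pow_eq_pow_val, sq]
    rw [hval]
    set X : M2 := (h : M2) with hX
    have hid : X * X - 1 = (X - 1) * (X - 1) + (2 : M2) * (X - 1) := by noncomm_ring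
    rw [hid, Matrix.add_apply]
    refine dvd_add ?_ ?_
    · have h16 := dvd_mul_apply' hm hm i j
      have : (2:ℤ_[2])^3 ∣ (2:ℤ_[2])^2 * (2:ℤ_[2])^2 := by
        rw [← pow_add]; exact pow_dvd_pow 2 (by norm_num)
      exact dvd_trans this h16
    · rw [two_mul_apply']
      have : (2:ℤ_[2])^3 = 2 * (2:ℤ_[2])^2 := by ring
      rw [this]
      exact mul_dvd_mul_left 2 (hm i j)
  · intro hg
    rw [mem_congSubgroup_iff'] at hg
    -- extract B with g = 1 + 8 B
    choose b hb using fun i j => hg i j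
    set B : M2 := Matrix.of b with hBdef
    have hgB : (g : M2) = 1 + (8 : M2) * B := by
      ext i j
      have : ((8:ℕ) : M2) = (8 : M2) := by norm_cast
      rw [Matrix.add_apply, ← this, natCast_mul_apply' 8 B i j]
      have hbij := hb i j
      rw [Matrix.sub_apply] at hbij
      have : ((8:ℕ) : ℤ_[2]) = (2:ℤ_[2])^3 := by norm_num
      rw [this]
      rw [sub_eq_iff_eq_add] at hbij
      rw [hbij]
      show (2:ℤ_[2]) ^ 3 * b i j + (1:M2) i j = (1:M2) i j + (2:ℤ_[2]) ^ 3 * b i j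
      exact add_comm _ _
    obtain ⟨A, hAB⟩ := exists_sqrt_aux' B
    set h : M2 := 1 + (4 : M2) * A with hhdef
    have hsq : h * h = (g : M2) := by
      rw [hgB, ← hAB, hhdef]; noncomm_ring
    have hentry : ∀ i j, h i j = (1:M2) i j + (4:ℤ_[2]) * A i j := by
      intro i j
      rw [hhdef, Matrix.add_apply]
      congr 1
      have h4c : ((4:ℕ) : M2) = (4 : M2) := by norm_cast
      rw [← h4c, natCast_mul_apply']
      norm_num
    have h4 : ∀ i j, (2:ℤ_[2])^2 ∣ (h - 1) i j := by
      intro i j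
      rw [Matrix.sub_apply, hentry i j]
      have : (1:M2) i j + (4:ℤ_[2]) * A i j - (1:M2) i j = (2:ℤ_[2])^2 * A i j := by ring
      rw [this]
      exact Dvd.dvd.mul_right dvd_rfl _
    have hdet : IsUnit h.det := by
      by_contra hu
      have hmem : h.det ∈ IsLocalRing.maximalIdeal ℤ_[2] :=
        (IsLocalRing.mem_maximalIdeal _).mpr (mem_nonunits_iff.mpr hu)
      rw [PadicInt.maximalIdeal_eq_span_p, Ideal.mem_span_singleton] at hmem
      have hp2 : ((2:ℕ) : ℤ_[2]) = (2:ℤ_[2]) := by norm_cast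
      rw [hp2] at hmem
      have hdvd1 : (2:ℤ_[2]) ∣ h.det - 1 := by
        have e : h.det - 1 = 2 * (2*(A 0 0) + 2*(A 1 1) + 8*(A 0 0 * A 1 1) - 8*(A 0 1 * A 1 0)) := by
          rw [Matrix.det_fin_two, hentry 0 0, hentry 0 1, hentry 1 0, hentry 1 1]
          simp [Matrix.one_apply]
          ring
        exact ⟨_, e⟩
      have h1 : (2:ℤ_[2]) ∣ 1 := by
        have := dvd_sub hmem hdvd1
        simpa using this
      have : IsUnit (2:ℤ_[2]) := isUnit_of_dvd_one h1
      have hnu : ¬ IsUnit (2:ℤ_[2]) := by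
        have := (PadicInt.prime_p (p := 2)).not_unit
        rwa [hp2] at this
      exact hnu this
    have hU : IsUnit h := (Matrix.isUnit_iff_isUnit_det h).mpr hdet
    refine ⟨hU.unit, ?_, ?_⟩
    · rw [mem_congSubgroup_iff']
      intro i j
      have hval : ((hU.unit : GL (Fin 2) ℤ_[2]) : M2) = h := hU.unit_spec
      rw [hval]
      exact h4 i j
    · apply Units.ext
      have hval : ((hU.unit ^ 2 : GL (Fin 2) ℤ_[2]) : M2) = h * h := by
        rw [Units.val_pow_eq_pow_val, hU.unit_spec, sq]
      rw [hval, hsq]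
end

section
/- Let n ≥ 1 and let q ∈ ℚ₂^× with ord₂(q) ≥ 1 odd. Then ℚ₂^× / ⟨(ℚ₂^×)^{2ⁿ}, q⟩ is isomorphic to ℤ/2ℤ × ℤ/2ⁿℤ, generated by the classes of −1 and 5. -/
private lemma five_pow_two_pow (j : ℕ) : ∃ c : ℕ, Odd c ∧ 5 ^ 2 ^ j = 1 + 2 ^ (j + 2) * c := by
  induction j with
  | zero => exact ⟨1, odd_one, by norm_num⟩
  | succ j ih =>
    obtain ⟨c, hc, h⟩ := ih
    refine ⟨c + 2 ^ (j + 1) * c ^ 2, hc.add_even ⟨2 ^ j * c ^ 2, by ring⟩, ?_⟩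
    have h2 : 5 ^ 2 ^ (j + 1) = (5 ^ 2 ^ j) ^ 2 := by rw [← pow_mul, pow_succ]
    rw [h2, h]; ring

private lemma two_pow_cast_zero (n : ℕ) : (2 : ZMod (2 ^ (n + 2))) ^ (n + 2) = 0 := by
  have := ZMod.natCast_self (2 ^ (n + 2))
  push_cast at this
  exact this

private lemma five_pow_eq_one (n : ℕ) : (5 : ZMod (2 ^ (n + 2))) ^ 2 ^ n = 1 := by
  obtain ⟨c, -, h⟩ := five_pow_two_pow n
  have h2 := congrArg (Nat.cast : ℕ → ZMod (2 ^ (n + 2))) h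
  push_cast at h2
  rw [h2, two_pow_cast_zero]; ring

private lemma five_pow_ne_one (n : ℕ) (hn : 1 ≤ n) :
    (5 : ZMod (2 ^ (n + 2))) ^ 2 ^ (n - 1) ≠ 1 := by
  haveI : NeZero (2 ^ (n + 2)) := ⟨by positivity⟩
  obtain ⟨c, hc, h⟩ := five_pow_two_pow (n - 1)
  have hn' : n - 1 + 2 = n + 1 := by omega
  rw [hn'] at h
  intro hcon
  have h2 := congrArg (Nat.cast : ℕ → ZMod (2 ^ (n + 2))) h
  push_cast at h2
  rw [hcon] at h2
  have h3 : ((2 ^ (n + 1) * c : ℕ) : ZMod (2 ^ (n + 2))) = 0 := by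
    push_cast
    linear_combination -h2
  rw [ZMod.natCast_eq_zero_iff] at h3
  rw [pow_succ] at h3
  have h4 : 2 ∣ c := (mul_dvd_mul_iff_left (a := 2 ^ (n + 1)) (by positivity)).mp h3
  rw [Nat.odd_iff] at hc
  omega
private lemma four_dvd (n : ℕ) : (4 : ℕ) ∣ 2 ^ (n + 2) := ⟨2 ^ n, by ring⟩

private noncomputable def u5 (n : ℕ) : (ZMod (2 ^ (n + 2)))ˣ :=
  ZMod.unitOfCoprime 5 (Nat.Coprime.pow_right _ (by norm_num))

private lemma u5_val (n : ℕ) : ((u5 n : ZMod (2 ^ (n + 2)))) = 5 := by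
  rw [u5, ZMod.coe_unitOfCoprime]; norm_num

private lemma u5_pow (n : ℕ) : u5 n ^ 2 ^ n = 1 := by
  ext
  rw [Units.val_pow_eq_pow_val, u5_val, five_pow_eq_one, Units.val_one]

private lemma orderOf_u5 (n : ℕ) (hn : 1 ≤ n) : orderOf (u5 n) = 2 ^ n := by
  haveI : Fact (Nat.Prime 2) := ⟨Nat.prime_two⟩
  have h2 : ¬u5 n ^ 2 ^ (n - 1) = 1 := by
    intro hcon
    apply five_pow_ne_one n hn
    have := congrArg (Units.val) hcon
    rwa [Units.val_pow_eq_pow_val, u5_val, Units.val_one] at this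
  have h1 : u5 n ^ 2 ^ (n - 1 + 1) = 1 := by
    have : n - 1 + 1 = n := by omega
    rw [this]; exact u5_pow n
  have := orderOf_eq_prime_pow h2 h1
  rwa [show n - 1 + 1 = n by omega] at this

private noncomputable def rho (n : ℕ) : (ZMod (2 ^ (n + 2)))ˣ →* (ZMod 4)ˣ :=
  Units.map (ZMod.castHom (four_dvd n) (ZMod 4)).toMonoidHom

private lemma rho_u5 (n : ℕ) : rho n (u5 n) = 1 := by
  ext
  simp only [rho, Units.coe_map, RingHom.toMonoidHom_eq_coe, MonoidHom.coe_coe, Units.val_one]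
  rw [u5_val]
  have h5 : (5 : ZMod (2 ^ (n + 2))) = ((5 : ℕ) : ZMod (2 ^ (n + 2))) := by norm_num
  rw [h5, map_natCast]
  decide

private lemma rho_neg_one (n : ℕ) : rho n (-1) = -1 := by
  ext
  simp [rho]
private noncomputable def psi (n : ℕ) :
    Multiplicative (ZMod 2) × Multiplicative (ZMod (2 ^ n)) →* (ZMod (2 ^ (n + 2)))ˣ :=
  MonoidHom.mk' (fun ab => (-1) ^ (Multiplicative.toAdd ab.1).val *
      u5 n ^ (Multiplicative.toAdd ab.2).val) (by
    haveI : NeZero (2 ^ n) := ⟨by positivity⟩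
    rintro ⟨a, b⟩ ⟨c, d⟩
    simp only [Prod.fst_mul, Prod.snd_mul, toAdd_mul]
    have h1 : (-1 : (ZMod (2 ^ (n + 2)))ˣ) ^ (Multiplicative.toAdd a + Multiplicative.toAdd c).val
        = (-1) ^ ((Multiplicative.toAdd a).val + (Multiplicative.toAdd c).val) := by
      rw [ZMod.val_add]
      exact (pow_eq_pow_mod _ (by simp)).symm
    have h2 : u5 n ^ (Multiplicative.toAdd b + Multiplicative.toAdd d).val
        = u5 n ^ ((Multiplicative.toAdd b).val + (Multiplicative.toAdd d).val) := by
      rw [ZMod.val_add]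
      exact (pow_eq_pow_mod _ (u5_pow n)).symm
    rw [h1, h2]
    simp only [pow_add]
    rw [mul_mul_mul_comm])

private lemma psi_apply (n : ℕ) (a : ZMod 2) (b : ZMod (2 ^ n)) :
    psi n (Multiplicative.ofAdd a, Multiplicative.ofAdd b) = (-1) ^ a.val * u5 n ^ b.val := rfl

private lemma psi_injective (n : ℕ) (hn : 1 ≤ n) : Function.Injective (psi n) := by
  haveI : NeZero (2 ^ n) := ⟨by positivity⟩
  rw [injective_iff_map_eq_one]
  rintro ⟨a, b⟩ h
  simp only [psi, MonoidHom.mk'_apply] at h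
  have hval : (Multiplicative.toAdd a).val < 2 := ZMod.val_lt _
  have hbval : (Multiplicative.toAdd b).val < 2 ^ n := ZMod.val_lt _
  have hrho := congrArg (rho n) h
  rw [map_mul, map_pow, map_pow, rho_u5, rho_neg_one, one_pow, mul_one, map_one] at hrho
  have ha0 : (Multiplicative.toAdd a).val = 0 := by
    have hor : (Multiplicative.toAdd a).val = 0 ∨ (Multiplicative.toAdd a).val = 1 := by omega
    rcases hor with h0 | h1
    · exact h0
    · exfalso
      rw [h1, pow_one] at hrho
      have h4 := congrArg Units.val hrho
      rw [Units.val_one, Units.val_neg, Units.val_one] at h4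
      exact (by decide : ¬((-1 : ZMod 4) = 1)) h4
  rw [ha0, pow_zero, one_mul] at h
  have hb0 : (Multiplicative.toAdd b).val = 0 := by
    have hd := orderOf_dvd_of_pow_eq_one h
    rw [orderOf_u5 n hn] at hd
    exact Nat.eq_zero_of_dvd_of_lt hd hbval
  have ha : Multiplicative.toAdd a = 0 := (ZMod.val_eq_zero _).mp ha0
  have hb : Multiplicative.toAdd b = 0 := (ZMod.val_eq_zero _).mp hb0
  exact Prod.ext (toAdd_eq_zero.mp ha) (toAdd_eq_zero.mp hb)

private lemma psi_bijective (n : ℕ) (hn : 1 ≤ n) : Function.Bijective (psi n) := by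
  haveI : NeZero (2 ^ n) := ⟨by positivity⟩
  haveI : NeZero (2 ^ (n + 2)) := ⟨by positivity⟩
  rw [Fintype.bijective_iff_injective_and_card]
  refine ⟨psi_injective n hn, ?_⟩
  rw [Fintype.card_prod]
  rw [Fintype.card_multiplicative, Fintype.card_multiplicative, ZMod.card, ZMod.card,
    ZMod.card_units_eq_totient, Nat.totient_prime_pow Nat.prime_two (by omega)]
  rw [show n + 2 - 1 = n + 1 by omega]
  ring

private lemma exponent_lemma (n : ℕ) (hn : 1 ≤ n) (y : (ZMod (2 ^ (n + 2)))ˣ) :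
    y ^ 2 ^ n = 1 := by
  obtain ⟨⟨a, b⟩, rfl⟩ := (psi_bijective n hn).2 y
  simp only [psi, MonoidHom.mk'_apply]
  have he : ((-1 : (ZMod (2 ^ (n + 2)))ˣ) ^ 2 ^ n) = 1 :=
    Even.neg_one_pow ((Nat.even_pow).mpr ⟨even_two, by omega⟩)
  rw [mul_pow, ← pow_mul, ← pow_mul, mul_comm (Multiplicative.toAdd a).val,
    mul_comm (Multiplicative.toAdd b).val, pow_mul, pow_mul, he, u5_pow, one_pow, one_pow,
    mul_one]

private lemma closure_top (n : ℕ) (hn : 1 ≤ n) :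
    Subgroup.closure {(-1 : (ZMod (2 ^ (n + 2)))ˣ), u5 n} = ⊤ := by
  rw [eq_top_iff]
  intro y _
  obtain ⟨⟨a, b⟩, rfl⟩ := (psi_bijective n hn).2 y
  simp only [psi, MonoidHom.mk'_apply]
  have hm1 : (-1 : (ZMod (2 ^ (n + 2)))ˣ) ∈
      Subgroup.closure {(-1 : (ZMod (2 ^ (n + 2)))ˣ), u5 n} :=
    Subgroup.subset_closure (Set.mem_insert _ _)
  have hm2 : u5 n ∈ Subgroup.closure {(-1 : (ZMod (2 ^ (n + 2)))ˣ), u5 n} :=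
    Subgroup.subset_closure (Set.mem_insert_of_mem _ rfl)
  exact Subgroup.mul_mem _ (Subgroup.pow_mem _ hm1 _) (Subgroup.pow_mem _ hm2 _)
private lemma norm_two_padic : ‖(2 : ℤ_[2])‖ = 1 / 2 := by
  have h := @PadicInt.norm_p 2 ⟨Nat.prime_two⟩
  push_cast at h
  rw [h]
  norm_num

private lemma padic_sqrt {z : ℤ_[2]} {m : ℕ} (hm : 3 ≤ m) (h : ‖z - 1‖ ≤ (2 : ℝ) ^ (-(m : ℤ))) :
    ∃ c : ℤ_[2], c ^ 2 = z ∧ ‖c - 1‖ ≤ (2 : ℝ) ^ (-(m : ℤ) + 1) := by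
  haveI : Fact (Nat.Prime 2) := ⟨Nat.prime_two⟩
  set F : Polynomial ℤ_[2] := Polynomial.X ^ 2 - Polynomial.C z with hF
  have heval : F.eval 1 = 1 - z := by simp [hF]
  have hderiv : F.derivative.eval 1 = 2 := by
    simp [hF, Polynomial.derivative_X_pow]
    norm_num
  have hb : (2 : ℝ) ^ (-(m : ℤ)) ≤ 2 ^ (-3 : ℤ) := by
    apply zpow_le_zpow_right₀ (by norm_num)
    omega
  have hlt : ‖F.eval 1‖ < ‖F.derivative.eval 1‖ ^ 2 := by
    rw [heval, hderiv, norm_two_padic, norm_sub_rev]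
    calc ‖z - 1‖ ≤ (2 : ℝ) ^ (-(m : ℤ)) := h
      _ ≤ 2 ^ (-3 : ℤ) := hb
      _ < (1 / 2) ^ 2 := by norm_num
  obtain ⟨c, hc, hcdist, -, -⟩ := hensels_lemma hlt
  have hc2 : c ^ 2 = z := by
    have h2 := hc
    simp [hF] at h2
    exact sub_eq_zero.mp h2
  have hcd : ‖c - 1‖ < 1 / 2 := by rwa [Polynomial.coe_aeval_eq_eval, hderiv, norm_two_padic] at hcdist
  have hfac : (c - 1) * (c + 1) = z - 1 := by ring_nf; linear_combination hc2
  have hplus : ‖c + 1‖ = 1 / 2 := by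
    have he : c + 1 = (c - 1) + 2 := by ring
    rw [he, PadicInt.norm_add_eq_max_of_ne (by rw [norm_two_padic]; exact ne_of_lt hcd),
      norm_two_padic]
    exact max_eq_right hcd.le
  have hprod : ‖c - 1‖ * (1 / 2) = ‖z - 1‖ := by rw [← hplus, ← norm_mul, hfac]
  refine ⟨c, hc2, ?_⟩
  have : ‖c - 1‖ = 2 * ‖z - 1‖ := by linarith
  rw [this, zpow_add₀ (by norm_num : (2:ℝ) ≠ 0), zpow_one, mul_comm]
  have := mul_le_mul_of_nonneg_right h (by norm_num : (0:ℝ) ≤ 2)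
  linarith

private lemma padic_two_pow_root (n : ℕ) (hn : 1 ≤ n) :
    ∀ z : ℤ_[2], ‖z - 1‖ ≤ (2 : ℝ) ^ (-(n : ℤ) - 2) → ∃ c : ℤ_[2], c ^ 2 ^ n = z := by
  induction n, hn using Nat.le_induction with
  | base =>
    intro z hz
    obtain ⟨c, hc, -⟩ := padic_sqrt (m := 3) le_rfl (by
      rw [show (-((3:ℕ):ℤ)) = -((1:ℕ):ℤ) - 2 by norm_num]
      exact hz)
    exact ⟨c, by rw [pow_one, hc]⟩
  | succ n hn ih =>
    intro z hz
    obtain ⟨c, hc, hcb⟩ := padic_sqrt (m := n + 3) (by omega) (by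
      rw [show (-((n+3:ℕ):ℤ)) = -((n+1:ℕ):ℤ) - 2 by push_cast; ring]
      exact hz)
    obtain ⟨d, hd⟩ := ih c (by
      rw [show (-((n:ℕ):ℤ)) - 2 = -((n+3:ℕ):ℤ) + 1 by push_cast; ring]
      exact hcb)
    refine ⟨d, ?_⟩
    rw [pow_succ, pow_mul, hd, hc]
namespace TwoAdicAux

local notation "Q2" => ℚ_[2]

private lemma two_ne_zero' : (2 : Q2) ≠ 0 := by norm_num

private lemma norm_q2 {x : Q2} (hx : x ≠ 0) : ‖x‖ = (2 : ℝ) ^ (-x.valuation) := by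
  have := Padic.norm_eq_zpow_neg_valuation hx
  push_cast at this
  exact this

private lemma norm_two_q2 : ‖(2 : Q2)‖ = (1 / 2 : ℝ) := by
  have h := @Padic.norm_p 2 ⟨Nat.prime_two⟩
  push_cast at h
  rw [h]; norm_num

private noncomputable def Vhom : Q2ˣ →* Multiplicative ℤ :=
  MonoidHom.mk' (fun x => Multiplicative.ofAdd (x : Q2).valuation) (by
    intro x y
    rw [← ofAdd_add]
    congr 1
    rw [Units.val_mul]
    exact Padic.valuation_mul x.ne_zero y.ne_zero)

private lemma val_mul (x y : Q2ˣ) :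
    ((x * y : Q2ˣ) : Q2).valuation = (x : Q2).valuation + (y : Q2).valuation := by
  rw [Units.val_mul]
  exact Padic.valuation_mul x.ne_zero y.ne_zero

private lemma val_zpow (x : Q2ˣ) (k : ℤ) :
    ((x ^ k : Q2ˣ) : Q2).valuation = k * (x : Q2).valuation := by
  have := map_zpow Vhom x k
  simp only [Vhom, MonoidHom.mk'_apply] at this
  have h2 := congrArg Multiplicative.toAdd this
  simpa [toAdd_zpow, smul_eq_mul] using h2

private lemma val_pow (x : Q2ˣ) (k : ℕ) :
    ((x ^ k : Q2ˣ) : Q2).valuation = k * (x : Q2).valuation := by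
  have := val_zpow x (k : ℤ)
  rwa [zpow_natCast] at this

private lemma norm_unitPart (x : Q2ˣ) : ‖(x : Q2) * 2 ^ (-(x : Q2).valuation)‖ = 1 := by
  rw [norm_mul, norm_zpow, norm_q2 x.ne_zero, norm_two_q2]
  rw [show ((1:ℝ)/2) = 2⁻¹ by norm_num, inv_zpow, ← zpow_neg, neg_neg, ← zpow_add₀
    (by norm_num : (2:ℝ) ≠ 0)]
  norm_num

private noncomputable def upZ (x : Q2ˣ) : ℤ_[2] :=
  ⟨(x : Q2) * 2 ^ (-(x : Q2).valuation), le_of_eq (norm_unitPart x)⟩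

private lemma upZ_coe (x : Q2ˣ) : ((upZ x : ℤ_[2]) : Q2) = (x : Q2) * 2 ^ (-(x : Q2).valuation) :=
  rfl

private lemma upZ_norm (x : Q2ˣ) : ‖upZ x‖ = 1 := by
  rw [upZ, PadicInt.norm_eq_padic_norm]
  exact norm_unitPart x

private noncomputable def upFun (x : Q2ˣ) : ℤ_[2]ˣ :=
  (PadicInt.isUnit_iff.mpr (upZ_norm x)).unit

private lemma upFun_coe' (x : Q2ˣ) : (upFun x : ℤ_[2]) = upZ x := IsUnit.unit_spec _

private lemma upFun_coe (x : Q2ˣ) :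
    ((upFun x : ℤ_[2]) : Q2) = (x : Q2) * 2 ^ (-(x : Q2).valuation) := by
  rw [upFun_coe', upZ_coe]

private lemma pint_coe_inj {a b : ℤ_[2]} (h : (a : Q2) = (b : Q2)) : a = b :=
  Subtype.coe_injective h

private lemma punit_ext {a b : ℤ_[2]ˣ} (h : ((a : ℤ_[2]) : Q2) = ((b : ℤ_[2]) : Q2)) : a = b :=
  Units.ext (pint_coe_inj h)

private lemma upFun_mul (x y : Q2ˣ) : upFun (x * y) = upFun x * upFun y := by
  apply punit_ext
  rw [Units.val_mul, PadicInt.coe_mul, upFun_coe, upFun_coe, upFun_coe, Units.val_mul,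
    Padic.valuation_mul x.ne_zero y.ne_zero, neg_add, zpow_add₀ two_ne_zero']
  ring

private noncomputable def up : Q2ˣ →* ℤ_[2]ˣ := MonoidHom.mk' upFun upFun_mul

private noncomputable def two : Q2ˣ := Units.mk0 (2 : Q2) two_ne_zero'

private noncomputable def iota : ℤ_[2]ˣ →* Q2ˣ :=
  Units.map (PadicInt.Coe.ringHom (p := 2)).toMonoidHom

private lemma iota_coe (z : ℤ_[2]ˣ) : ((iota z : Q2ˣ) : Q2) = ((z : ℤ_[2]) : Q2) := rfl

private lemma decomp (x : Q2ˣ) : x = two ^ ((x : Q2).valuation) * iota (up x) := by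
  apply Units.ext
  rw [Units.val_mul, Units.val_zpow_eq_zpow_val, iota_coe]
  show (x : Q2) = (2 : Q2) ^ ((x : Q2).valuation) * ((upFun x : ℤ_[2]) : Q2)
  rw [upFun_coe, ← mul_assoc, mul_comm ((2:Q2) ^ _), mul_assoc, ← zpow_add₀ two_ne_zero']
  norm_num

private lemma val_iota (z : ℤ_[2]ˣ) : ((iota z : Q2ˣ) : Q2).valuation = 0 := by
  have h1 : ‖((z : ℤ_[2]) : Q2)‖ = 1 := by
    rw [← PadicInt.norm_def]
    exact PadicInt.norm_units z
  have hne : ((z : ℤ_[2]) : Q2) ≠ 0 := by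
    intro h0
    rw [h0] at h1; norm_num at h1
  have h2 := norm_q2 hne
  rw [h1] at h2
  rw [iota_coe]
  have h3 : (2 : ℝ) ^ (-((z : ℤ_[2]) : Q2).valuation) = (2 : ℝ) ^ (0 : ℤ) := by
    rw [zpow_zero]; exact h2.symm
  have h4 := zpow_right_injective₀ (by norm_num : (0:ℝ) < 2) (by norm_num) h3
  omega

private lemma up_iota (z : ℤ_[2]ˣ) : up (iota z) = z := by
  apply punit_ext
  show ((upFun (iota z) : ℤ_[2]) : Q2) = _
  rw [upFun_coe, val_iota, neg_zero, zpow_zero, mul_one, iota_coe]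

private lemma up_of_val_zero (x : Q2ˣ) (h : ((x : Q2)).valuation = 0) :
    ((upFun x : ℤ_[2]) : Q2) = (x : Q2) := by
  rw [upFun_coe, h, neg_zero, zpow_zero, mul_one]

end TwoAdicAux
namespace TwoAdicAux

private noncomputable def red (n : ℕ) : ℤ_[2]ˣ →* (ZMod (2 ^ (n + 2)))ˣ :=
  Units.map (PadicInt.toZModPow (n + 2)).toMonoidHom

private lemma red_apply (n : ℕ) (z : ℤ_[2]ˣ) :
    ((red n z : ZMod (2 ^ (n + 2)))) = PadicInt.toZModPow (n + 2) (z : ℤ_[2]) := rfl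

private lemma red_surjective (n : ℕ) : Function.Surjective (red n) := by
  haveI : NeZero (2 ^ (n + 2)) := ⟨by positivity⟩
  intro y
  have hodd : ¬(2 : ℤ) ∣ (((y : ZMod (2 ^ (n + 2))).val : ℕ) : ℤ) := by
    have hcop := ZMod.val_coe_unit_coprime y
    intro hdvd
    have h2 : 2 ∣ (y : ZMod (2 ^ (n + 2))).val := by exact_mod_cast hdvd
    have h3 : 2 ∣ Nat.gcd (y : ZMod (2 ^ (n + 2))).val (2 ^ (n + 2)) :=
      Nat.dvd_gcd h2 ⟨2 ^ (n + 1), by ring⟩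
    rw [Nat.Coprime] at hcop
    omega
  have hnorm : ‖(((y : ZMod (2 ^ (n + 2))).val : ℕ) : ℤ_[2])‖ = 1 := by
    have hle := PadicInt.norm_le_one (((y : ZMod (2 ^ (n + 2))).val : ℕ) : ℤ_[2])
    rcases lt_or_eq_of_le hle with hlt | heq
    · exfalso
      apply hodd
      have := (PadicInt.norm_int_lt_one_iff_dvd (p := 2) ((y : ZMod (2 ^ (n + 2))).val : ℤ)).mp (by
        push_cast
        exact hlt)
      exact_mod_cast this
    · exact heq
  refine ⟨(PadicInt.isUnit_iff.mpr hnorm).unit, ?_⟩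
  apply Units.ext
  rw [red_apply, IsUnit.unit_spec, map_natCast, ZMod.natCast_zmod_val]

private noncomputable def Fhom (n : ℕ) (s : (ZMod (2 ^ (n + 2)))ˣ) (w : ℤ) :
    ℚ_[2]ˣ →* (ZMod (2 ^ (n + 2)))ˣ :=
  MonoidHom.mk' (fun x => red n (up x) * s ^ (-(w * (x : ℚ_[2]).valuation))) (by
    intro x y
    rw [map_mul up, map_mul (red n), val_mul, mul_mul_mul_comm, ← zpow_add]
    congr 1
    ring_nf)

end TwoAdicAux

open TwoAdicAux

private lemma neg_one_eq_iota : (-1 : ℚ_[2]ˣ) = TwoAdicAux.iota (-1) := by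
  apply Units.ext
  rw [TwoAdicAux.iota_coe]
  simp

private lemma isUnit_five : ‖(((5 : ℕ) : ℤ_[2]))‖ = 1 := by
  have hle := PadicInt.norm_le_one (((5 : ℕ)) : ℤ_[2])
  rcases lt_or_eq_of_le hle with hlt | heq
  · exfalso
    have := (PadicInt.norm_int_lt_one_iff_dvd (p := 2) (5 : ℤ)).mp (by push_cast at hlt ⊢; exact hlt)
    norm_num at this
  · exact heq

private noncomputable def u5Z : ℤ_[2]ˣ := (PadicInt.isUnit_iff.mpr isUnit_five).unit

private lemma u5Z_coe : (u5Z : ℤ_[2]) = ((5 : ℕ) : ℤ_[2]) := IsUnit.unit_spec _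

/-- Let `n ≥ 1` and `q ∈ ℚ₂^×` with `ord₂(q) ≥ 1` odd. Then
`ℚ₂^× / ⟨(ℚ₂^×)^{2ⁿ}, q⟩ ≅ ℤ/2ℤ × ℤ/2ⁿℤ`, generated by the classes of `−1` and `5`. -/
theorem two_adic_units_quotient (n : ℕ) (hn : 1 ≤ n)
    (q : ℚ_[2]ˣ) (hq1 : 1 ≤ (q : ℚ_[2]).valuation) (hq2 : Odd ((q : ℚ_[2]).valuation))
    (u : ℚ_[2]ˣ) (hu : (u : ℚ_[2]) = 5) :
    Nonempty ((ℚ_[2]ˣ ⧸ Subgroup.closure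
        ((Set.range fun x : ℚ_[2]ˣ => x ^ 2 ^ n) ∪ {q})) ≃*
      Multiplicative (ZMod 2) × Multiplicative (ZMod (2 ^ n))) ∧
    Subgroup.closure
        {(QuotientGroup.mk (-1) : ℚ_[2]ˣ ⧸ Subgroup.closure
            ((Set.range fun x : ℚ_[2]ˣ => x ^ 2 ^ n) ∪ {q})),
          QuotientGroup.mk u} = ⊤ := by
  classical
  open TwoAdicAux in
  haveI : NeZero ((2 : ℕ) ^ (n + 2)) := ⟨by positivity⟩
  set H := Subgroup.closure ((Set.range fun x : ℚ_[2]ˣ => x ^ 2 ^ n) ∪ {q}) with hHdef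
  haveI := H.normal_of_comm
  -- a Bezout pair for the odd valuation of q
  set vq := (q : ℚ_[2]).valuation with hvq
  obtain ⟨m, hm⟩ := hq2
  have hcop : IsCoprime vq (2 : ℤ) := ⟨1, -m, by rw [hvq]; linarith⟩
  obtain ⟨w, t0, hwt⟩ := hcop.pow_right (n := n)
  set k := -t0 with hk
  have hwk : w * vq = 1 + 2 ^ n * k := by rw [hk]; linarith
  -- the reduction homomorphism
  set s := red n (up q) with hs
  set F := Fhom n s w with hF
  have hFapp : ∀ x : ℚ_[2]ˣ, F x = red n (up x) * s ^ (-(w * (x : ℚ_[2]).valuation)) :=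
    fun _ => rfl
  have hs1 : ∀ j : ℤ, s ^ (2 ^ n * j) = 1 := by
    intro j
    have h1 : ((2 : ℤ) ^ n) = ((2 ^ n : ℕ) : ℤ) := by push_cast; ring
    rw [zpow_mul, h1, zpow_natCast, exponent_lemma n hn, one_zpow]
  have hFq : F q = 1 := by
    rw [hFapp q, ← hvq, ← hs, mul_comm, ← zpow_add_one,
      show -(w * vq) + 1 = 2 ^ n * (-k) by linarith, hs1]
  have hFpow : ∀ x : ℚ_[2]ˣ, F (x ^ 2 ^ n) = 1 := by
    intro x
    rw [map_pow]
    exact exponent_lemma n hn _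
  have hle : H ≤ F.ker := by
    rw [hHdef]
    rw [Subgroup.closure_le]
    rintro x (⟨y, rfl⟩ | hx)
    · exact hFpow y
    · rw [Set.mem_singleton_iff] at hx
      subst hx
      exact hFq
  have hker : F.ker ≤ H := by
    intro x hx
    rw [MonoidHom.mem_ker] at hx
    set v := (x : ℚ_[2]).valuation with hv
    set t := x * q ^ (-(w * v)) with ht
    have hqH : q ∈ H := Subgroup.subset_closure (Or.inr rfl)
    have hvt : ((t : ℚ_[2])).valuation = 2 ^ n * (v * (-k)) := by
      rw [ht, val_mul, val_zpow, ← hv, ← hvq]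
      have : -(w * v) * vq = v * -(w * vq) := by ring
      rw [this, hwk]
      ring
    have hFt : F t = 1 := by
      rw [ht, map_mul, map_zpow, hx, hFq, one_zpow, one_mul]
    have hredt : red n (up t) = 1 := by
      have h2 := hFt
      rw [hFapp t, hvt] at h2
      rw [show -(w * (2 ^ n * (v * -k))) = 2 ^ n * (-(w * (v * -k))) by ring, hs1,
        mul_one] at h2
      exact h2
    have hmem : ((up t : ℤ_[2]) - 1) ∈ Ideal.span {(2 : ℤ_[2]) ^ (n + 2)} := by
      have h3 : PadicInt.toZModPow (n + 2) (up t : ℤ_[2]) = 1 := by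
        have := congrArg Units.val hredt
        rwa [red_apply, Units.val_one] at this
      have h4 : (2 : ℤ_[2]) = ((2 : ℕ) : ℤ_[2]) := by push_cast; ring
      rw [h4, ← PadicInt.ker_toZModPow]
      rw [RingHom.mem_ker, map_sub, map_one, h3, sub_self]
    have hnorm : ‖(up t : ℤ_[2]) - 1‖ ≤ (2 : ℝ) ^ (-(n : ℤ) - 2) := by
      have h5 := (PadicInt.norm_le_pow_iff_mem_span_pow ((up t : ℤ_[2]) - 1) (n + 2)).mpr (by
        have h4 : ((2 : ℕ) : ℤ_[2]) = (2 : ℤ_[2]) := by push_cast; ring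
        rw [h4]
        exact hmem)
      have h6 : ((2 : ℕ) : ℝ) ^ (-((n + 2 : ℕ) : ℤ)) = (2 : ℝ) ^ (-(n : ℤ) - 2) := by
        have h7 : (-((n + 2 : ℕ) : ℤ)) = -(n : ℤ) - 2 := by push_cast; ring
        rw [h7]
        norm_num
      rw [h6] at h5
      exact h5
    obtain ⟨c, hc⟩ := padic_two_pow_root n hn _ hnorm
    have hcnorm : ‖c‖ = 1 := by
      have h7 : ‖c‖ ^ 2 ^ n = 1 := by
        rw [← norm_pow, hc]
        exact PadicInt.isUnit_iff.mp (up t).isUnit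
      have h8 := PadicInt.norm_le_one c
      rcases lt_or_eq_of_le h8 with hlt | heq
      · exfalso
        have := pow_lt_one₀ (norm_nonneg c) hlt (by positivity : 2 ^ n ≠ 0)
        rw [h7] at this
        norm_num at this
      · exact heq
    set cu := (PadicInt.isUnit_iff.mpr hcnorm).unit with hcu
    have hcuc : (cu : ℤ_[2]) = c := IsUnit.unit_spec _
    have hupt : up t = cu ^ 2 ^ n := by
      apply Units.ext
      rw [Units.val_pow_eq_pow_val, hcuc, hc]
    have htH : t ∈ H := by
      have hdec := decomp t
      rw [hvt, hupt, map_pow] at hdec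
      have h9 : two ^ ((2 : ℤ) ^ n * (v * -k)) = (two ^ (v * -k)) ^ 2 ^ n := by
        rw [mul_comm ((2:ℤ)^n), zpow_mul, show ((2:ℤ)^n) = ((2^n : ℕ) : ℤ) by push_cast; ring,
          zpow_natCast]
      rw [h9, ← mul_pow] at hdec
      rw [hdec]
      exact Subgroup.subset_closure (Or.inl ⟨two ^ (v * -k) * iota cu, rfl⟩)
    have hxt : x = t * q ^ (w * v) := by
      rw [ht, mul_assoc, ← zpow_add, neg_add_cancel, zpow_zero, mul_one]
    rw [hxt]
    exact H.mul_mem htH (H.zpow_mem hqH _)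
  have hsurj : Function.Surjective F := by
    intro y
    obtain ⟨z, hz⟩ := red_surjective n y
    refine ⟨iota z, ?_⟩
    rw [hFapp, show up (iota z) = z from up_iota z, val_iota, mul_zero, neg_zero, zpow_zero,
      mul_one, hz]
  -- the quotient equivalence
  set e := QuotientGroup.lift H F hle with he
  have hemk : ∀ x : ℚ_[2]ˣ, e (QuotientGroup.mk x) = F x := fun x => rfl
  have h_einj : Function.Injective e := by
    rw [injective_iff_map_eq_one]
    intro a ha
    induction a using QuotientGroup.induction_on with
    | H x =>
      rw [hemk] at ha
      exact (QuotientGroup.eq_one_iff x).mpr (hker ha)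
  have h_esurj : Function.Surjective e := by
    intro y
    obtain ⟨x, hx⟩ := hsurj y
    exact ⟨QuotientGroup.mk x, by rw [hemk, hx]⟩
  set E := MulEquiv.ofBijective e ⟨h_einj, h_esurj⟩ with hE
  constructor
  · exact ⟨E.trans (MulEquiv.ofBijective (psi n) (psi_bijective n hn)).symm⟩
  · -- generation
    have hF1 : F (-1) = -1 := by
      rw [neg_one_eq_iota, hFapp, show up (iota (-1)) = (-1 : ℤ_[2]ˣ) from up_iota _, val_iota,
        mul_zero, neg_zero, zpow_zero, mul_one]
      apply Units.ext
      rw [red_apply]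
      simp
    have hFu : F u = u5 n := by
      have hui : u = iota u5Z := by
        apply Units.ext
        rw [iota_coe, u5Z_coe, hu, PadicInt.coe_natCast]
        norm_num
      rw [hui, hFapp, show up (iota u5Z) = u5Z from up_iota _, val_iota, mul_zero, neg_zero,
        zpow_zero, mul_one]
      apply Units.ext
      rw [red_apply, u5Z_coe, map_natCast, u5_val]
      norm_num
    have hmap : Subgroup.map E.toMonoidHom
        (Subgroup.closure {(QuotientGroup.mk (-1) : ℚ_[2]ˣ ⧸ H), QuotientGroup.mk u}) =
        Subgroup.closure {(-1 : (ZMod (2 ^ (n + 2)))ˣ), u5 n} := by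
      rw [MonoidHom.map_closure, Set.image_pair]
      have h10 : E.toMonoidHom (QuotientGroup.mk (-1)) = -1 := by
        show e (QuotientGroup.mk (-1)) = -1
        rw [hemk, hF1]
      have h11 : E.toMonoidHom (QuotientGroup.mk u) = u5 n := by
        show e (QuotientGroup.mk u) = u5 n
        rw [hemk, hFu]
      rw [h10, h11]
    rw [closure_top n hn] at hmap
    have h12 : Subgroup.map E.toMonoidHom ⊤ = ⊤ :=
      Subgroup.map_top_of_surjective _ E.surjective
    exact Subgroup.map_injective E.injective (hmap.trans h12.symm)
end
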